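/- arXiv:2405.19470 — 3 statements merged into one kernel-verified Lean document; each statement's English description precedes it below -/
import Mathlib

section
/- For N ∈ ℕ, let F_N ⊂ ℤ₂ be the set of 2-adic integers whose binary digit sequence never contains more than N consecutive equal digits (zeros or ones). Define κ(ϰ) ∈ ℤ₂ to have n-th binary digit equal to the 0-th binary digit of ŝⁿϰ, where ŝ is the modified shift. Then ϰ ∈ F_N implies κ(ϰ) ∈ F_{N+1}. -/
set_option maxHeartbeats 1000000

/-- `x ∈ F_N`: among any `N+1` consecutive binary digits of `x` (positions `m, …, m+N`),
not all are equal, i.e. `x` has at most `N` consecutive equal digits. -/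
def ConsecBound (ε : ℤ_[2] → ℕ → ℕ) (N : ℕ) (x : ℤ_[2]) : Prop :=
  ∀ m : ℕ, ∃ i ≤ N, ∃ j ≤ N, ε x (m + i) ≠ ε x (m + j)

private lemma aux_summable (ε : ℕ → ℕ) : Summable (fun k : ℕ => (ε k : ℤ_[2]) * 2 ^ k) := by
  apply Summable.of_norm
  apply Summable.of_nonneg_of_le (fun k => norm_nonneg _) (fun k => ?_)
    (summable_geometric_of_lt_one (by norm_num) (by norm_num : (1/2:ℝ) < 1))
  have h1 : ‖((ε k : ℤ_[2]))‖ ≤ 1 := PadicInt.norm_le_one _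
  have h2 : ‖(2:ℤ_[2])^k‖ = (1/2)^k := by
    have := @PadicInt.norm_p_pow 2 ⟨by norm_num⟩ k
    push_cast at this
    rw [show ((2:ℤ_[2])^k) = ((2:ℕ):ℤ_[2])^k by norm_num] at *
    rw [this]
    rw [zpow_neg, ← zpow_natCast]
    norm_num
    rw [one_div, inv_pow]
  calc ‖(ε k : ℤ_[2]) * 2 ^ k‖ = ‖((ε k : ℤ_[2]))‖ * ‖(2:ℤ_[2])^k‖ := norm_mul _ _
    _ ≤ 1 * (1/2)^k := by rw [h2]; exact mul_le_mul_of_nonneg_right h1 (by positivity)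
    _ = (1/2)^k := one_mul _

private lemma aux_tail (y : ℤ_[2]) (ε : ℕ → ℕ)
    (hy : y = ∑' k : ℕ, (ε k : ℤ_[2]) * 2 ^ k) (n : ℕ) :
    (2:ℤ_[2])^n ∣ (y - ((∑ k ∈ Finset.range n, ε k * 2 ^ k : ℕ) : ℤ_[2])) := by
  have hsum := aux_summable ε
  have hs' : Summable (fun k : ℕ => (ε (k + n) : ℤ_[2]) * 2 ^ (k + n)) :=
    (summable_nat_add_iff n).2 hsum
  have h := Summable.sum_add_tsum_nat_add (f := fun k : ℕ => (ε k : ℤ_[2]) * 2 ^ k) n hsum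
  refine ⟨∑' k : ℕ, (ε (k + n) : ℤ_[2]) * 2 ^ k, ?_⟩
  have hc : ((∑ k ∈ Finset.range n, ε k * 2 ^ k : ℕ) : ℤ_[2])
      = ∑ k ∈ Finset.range n, (ε k : ℤ_[2]) * 2 ^ k := by push_cast; ring
  rw [hc, hy, ← h]
  have : ∑' k : ℕ, (ε (k + n) : ℤ_[2]) * 2 ^ (k + n)
      = (2:ℤ_[2])^n * ∑' k : ℕ, (ε (k + n) : ℤ_[2]) * 2 ^ k := by
    calc ∑' k : ℕ, (ε (k + n) : ℤ_[2]) * 2 ^ (k + n)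
        = ∑' k : ℕ, (2:ℤ_[2])^n * ((ε (k + n) : ℤ_[2]) * 2 ^ k) := tsum_congr (fun k => by ring)
      _ = (2:ℤ_[2])^n * ∑' k : ℕ, (ε (k + n) : ℤ_[2]) * 2 ^ k :=
          (aux_summable (fun k => ε (k + n))).tsum_mul_left _
  rw [← this]
  ring

private lemma aux_nat_dvd (n m : ℕ) (h : (2:ℤ_[2])^n ∣ (m : ℤ_[2])) : 2^n ∣ m := by
  have : ((2:ℕ) ^ n : ℤ) ∣ (m : ℤ) := by
    rw [← PadicInt.pow_p_dvd_int_iff]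
    push_cast at h ⊢
    exact_mod_cast h
  exact_mod_cast this

private lemma aux_zero (y : ℤ_[2]) (h : ∀ n : ℕ, (2:ℤ_[2])^n ∣ y) : y = 0 := by
  by_contra hy
  have h0 : 0 < ‖y‖ := norm_pos_iff.2 hy
  obtain ⟨k, hk⟩ := PadicInt.exists_pow_neg_lt 2 h0
  have := (PadicInt.norm_le_pow_iff_mem_span_pow y k).2 (Ideal.mem_span_singleton.2 (h k))
  exact absurd (this.trans_lt hk) (lt_irrefl _)

theorem stmt5 (ε : ℤ_[2] → ℕ → ℕ)
    (hdig : ∀ x : ℤ_[2], (∀ k, ε x k ≤ 1) ∧ x = ∑' k : ℕ, (ε x k : ℤ_[2]) * 2 ^ k)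
    (s shat : ℤ_[2] → ℤ_[2]) (hs : ∀ κ, κ = 2 * s κ ∨ κ = 1 + 2 * s κ)
    (hshat : ∀ κ, (κ = 2 * s κ → shat κ = s κ) ∧ (κ = 1 + 2 * s κ → shat κ = 1 + s κ))
    (x kx : ℤ_[2]) (hkx : ∀ n : ℕ, ε kx n = ε (shat^[n] x) 0)
    (N : ℕ) (hx : ConsecBound ε N x) : ConsecBound ε (N + 1) kx := by
  have hε : ∀ y k, ε y k ≤ 1 := fun y => (hdig y).1
  set A : ℤ_[2] → ℕ → ℕ := fun y n => ∑ k ∈ Finset.range n, ε y k * 2 ^ k with hAdef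
  have htail : ∀ (y : ℤ_[2]) (n : ℕ), (2:ℤ_[2])^n ∣ (y - (A y n : ℤ_[2])) :=
    fun y n => aux_tail y (ε y) (hdig y).2 n
  have hAsucc : ∀ (y : ℤ_[2]) (n : ℕ), A y (n+1) = A y n + ε y n * 2^n :=
    fun y n => Finset.sum_range_succ _ n
  have h2not1 : ¬ (2:ℤ_[2]) ∣ ((1:ℕ) : ℤ_[2]) := by
    intro h
    have := aux_nat_dvd 1 1 (by simpa using h)
    omega
  -- parity: 2 * shat κ = κ + ε κ 0
  have hpar : ∀ κ : ℤ_[2], 2 * shat κ = κ + ε κ 0 := by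
    intro κ
    have h1 : (2:ℤ_[2]) ∣ (κ - ((ε κ 0 : ℕ) : ℤ_[2])) := by
      have := htail κ 1
      simpa [hAdef] using this
    rcases hs κ with h | h
    · have h2 : (2:ℤ_[2]) ∣ κ := ⟨s κ, h⟩
      have h3 : (2:ℤ_[2]) ∣ ((ε κ 0 : ℕ) : ℤ_[2]) := by
        have := dvd_sub h2 h1
        simpa using this
      have h0 : ε κ 0 = 0 := by
        rcases Nat.le_one_iff_eq_zero_or_eq_one.1 (hε κ 0) with h' | h'
        · exact h'
        · rw [h'] at h3; exact absurd h3 h2not1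
      rw [(hshat κ).1 h, h0]
      push_cast
      linear_combination -h
    · have h0 : ε κ 0 = 1 := by
        rcases Nat.le_one_iff_eq_zero_or_eq_one.1 (hε κ 0) with h' | h'
        · exfalso
          rw [h'] at h1
          have h2 : (2:ℤ_[2]) ∣ (2 * s κ) := ⟨s κ, rfl⟩
          have h3 : (2:ℤ_[2]) ∣ ((1:ℕ):ℤ_[2]) := by
            have hd := dvd_sub h1 h2
            have he : κ - ((0:ℕ):ℤ_[2]) - 2 * s κ = ((1:ℕ):ℤ_[2]) := by
              push_cast
              linear_combination h
            rwa [he] at hd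
          exact h2not1 h3
        · exact h'
      rw [(hshat κ).2 h, h0]
      push_cast
      linear_combination -h
  -- iteration formula
  have hiter : ∀ n : ℕ, (2:ℤ_[2])^n * shat^[n] x = x + (A kx n : ℤ_[2]) := by
    intro n
    induction n with
    | zero => simp [hAdef]
    | succ n ih =>
      rw [Function.iterate_succ_apply']
      have h1 := hpar (shat^[n] x)
      have hAr : ((A kx (n+1) : ℕ) : ℤ_[2]) = (A kx n : ℤ_[2]) + (ε kx n : ℤ_[2]) * 2^n := by
        rw [hAsucc]; push_cast; ring
      calc (2:ℤ_[2])^(n+1) * shat (shat^[n] x) = 2^n * (2 * shat (shat^[n] x)) := by ring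
        _ = 2^n * (shat^[n] x + ε (shat^[n] x) 0) := by rw [h1]
        _ = 2^n * shat^[n] x + (ε kx n : ℤ_[2]) * 2^n := by rw [← hkx n]; ring
        _ = x + (A kx (n+1) : ℤ_[2]) := by rw [ih, hAr]; ring
  -- kx = -x
  have hzero : x + kx = 0 := by
    apply aux_zero
    intro n
    have h1 := htail kx n
    have h2 : (2:ℤ_[2])^n ∣ (x + (A kx n : ℤ_[2])) := ⟨shat^[n] x, (hiter n).symm⟩
    have he : x + kx = (x + (A kx n : ℤ_[2])) + (kx - (A kx n : ℤ_[2])) := by ring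
    rw [he]
    exact dvd_add h2 h1
  -- carry digits
  have hdvdnat : ∀ n : ℕ, 2^n ∣ A x n + A kx n := by
    intro n
    apply aux_nat_dvd
    have h1 := htail x n
    have h2 := htail kx n
    have he : ((A x n + A kx n : ℕ) : ℤ_[2])
        = (x + kx) - (x - (A x n : ℤ_[2])) - (kx - (A kx n : ℤ_[2])) := by push_cast; ring
    rw [he, hzero]
    exact dvd_sub (dvd_sub (dvd_zero _) h1) h2
  have hAlt : ∀ (y : ℤ_[2]) (n : ℕ), A y n < 2^n := by
    intro y n
    induction n with
    | zero => simp [hAdef]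
    | succ n ih =>
      have h1 : ε y n * 2^n ≤ 2^n := by
        have := hε y n
        calc ε y n * 2^n ≤ 1 * 2^n := Nat.mul_le_mul_right _ this
          _ = 2^n := one_mul _
      have h2 : (2:ℕ)^(n+1) = 2^n + 2^n := by ring
      rw [hAsucc]
      omega
  set S : ℕ → ℕ := fun n => (A x n + A kx n) / 2^n with hSdef
  have hS : ∀ n, A x n + A kx n = 2^n * S n := by
    intro n
    rw [hSdef]
    exact (Nat.mul_div_cancel' (hdvdnat n) ).symm
  have hS1 : ∀ n, S n ≤ 1 := by
    intro n
    have h1 := hAlt x n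
    have h2 := hAlt kx n
    have h3 := hS n
    by_contra h
    push_neg at h
    have : 2^n * 2 ≤ 2^n * S n := Nat.mul_le_mul_left _ h
    omega
  have hstep : ∀ n, ε x n + ε kx n + S n = 2 * S (n+1) := by
    intro n
    have key : 2^n * (2 * S (n+1)) = 2^n * (ε x n + ε kx n + S n) := by
      calc 2^n * (2 * S (n+1)) = 2^(n+1) * S (n+1) := by ring
        _ = A x (n+1) + A kx (n+1) := (hS (n+1)).symm
        _ = (A x n + A kx n) + (ε x n + ε kx n) * 2^n := by rw [hAsucc, hAsucc]; ring
        _ = 2^n * S n + (ε x n + ε kx n) * 2^n := by rw [hS]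
        _ = 2^n * (ε x n + ε kx n + S n) := by ring
    have hp : 0 < 2^n := Nat.pow_pos (n := n) (by norm_num)
    have := Nat.eq_of_mul_eq_mul_left hp key
    omega
  -- final combinatorial argument
  intro m
  by_contra hcon
  push_neg at hcon
  have hall : ∀ t, t ≤ N+1 → ε kx (m+t) = ε kx m := by
    intro t ht
    have := hcon t ht 0 (Nat.zero_le _)
    simpa using this
  rcases Nat.le_one_iff_eq_zero_or_eq_one.1 (hS1 (m+1)) with h1 | h1
  · -- carry never appeared: digits of x are 0 throughout the window
    have hm0 : ε x m = 0 ∧ ε kx m = 0 ∧ S m = 0 := by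
      have h2 := hstep m
      have h3 := hε x m
      have h4 := hε kx m
      have h5 := hS1 m
      omega
    have claimS : ∀ t, t ≤ N+1 → S (m+t) = 0 := by
      intro t
      induction t with
      | zero => intro _; exact hm0.2.2
      | succ t ih =>
        intro ht
        have h2 := ih (by omega)
        have h3 := hstep (m+t)
        have h4 := hall t (by omega)
        have h5 := hε x (m+t)
        have h6 : m + (t+1) = (m+t) + 1 := by ring
        rw [h6]
        omega
    have hxz : ∀ t, t ≤ N → ε x (m+t) = 0 := by
      intro t ht
      have h2 := claimS t (by omega)
      have h3 := claimS (t+1) (by omega)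
      have h4 := hstep (m+t)
      have h5 := hall t (by omega)
      have h6 : m + (t+1) = (m+t) + 1 := by ring
      rw [h6] at h3
      omega
    obtain ⟨i, hi, j, hj, hne⟩ := hx m
    exact hne (by rw [hxz i hi, hxz j hj])
  · -- carry present: digits of x are constant (complement) on the window m+1..m+N+1
    have hmono : ∀ t, S (m+1+t) = 1 := by
      intro t
      induction t with
      | zero => simpa using h1
      | succ t ih =>
        have h2 := hstep (m+1+t)
        have h3 := hS1 (m+1+t+1)
        have h4 := hε x (m+1+t)
        have h5 := hε kx (m+1+t)
        have h6 : m+1+(t+1) = (m+1+t) + 1 := by ring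
        rw [h6]
        omega
    have hxconst : ∀ t, 1 ≤ t → t ≤ N+1 → ε x (m+t) = 1 - ε kx m := by
      intro t h1t h2t
      have hs1 : S (m+t) = 1 := by
        have := hmono (t-1)
        rwa [show m+1+(t-1) = m+t by omega] at this
      have hs2 : S (m+t+1) = 1 := by
        have := hmono t
        rwa [show m+1+t = m+t+1 by omega] at this
      have h2 := hstep (m+t)
      have h3 := hall t (by omega)
      have h4 := hε x (m+t)
      have h5 := hε kx (m+t)
      have h6 := hε kx m
      omega
    obtain ⟨i, hi, j, hj, hne⟩ := hx (m+1)
    apply hne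
    rw [show m+1+i = m+(1+i) by ring, show m+1+j = m+(1+j) by ring]
    rw [hxconst (1+i) (by omega) (by omega), hxconst (1+j) (by omega) (by omega)]
end

section
/- Let λ > 2 and a : ℤ₂ → ℝ≥0 satisfy a_{2κ}² + a_{2κ+1}² = λ, a_{2κ+1}² a_{2κ+2}² = a_{κ+1}², and a_κ² ≤ 1 for even κ. Then for every odd κ' ∈ ℤ₂ and every n ≥ 0, a_{2ⁿκ'}² ≥ (λ-1)/λⁿ. Consequently, if ϰ ∈ F_N (at most N consecutive equal binary digits) and ϰ ≠ 0, then a_ϰ² ≥ (λ-1)/λ^N. -/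
theorem stmt9 (lam : ℝ) (hlam : 2 < lam)
    (ε : ℤ_[2] → ℕ → ℕ)
    (hdig : ∀ x : ℤ_[2], (∀ k, ε x k ≤ 1) ∧ x = ∑' k : ℕ, (ε x k : ℤ_[2]) * 2 ^ k)
    (a : ℤ_[2] → ℝ) (ha : ∀ κ, 0 ≤ a κ)
    (h1 : ∀ κ : ℤ_[2], a (2 * κ) ^ 2 + a (2 * κ + 1) ^ 2 = lam)
    (h2 : ∀ κ : ℤ_[2], a (2 * κ + 1) ^ 2 * a (2 * κ + 2) ^ 2 = a (κ + 1) ^ 2)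
    (h3 : ∀ κ : ℤ_[2], (∃ m, κ = 2 * m) → a κ ^ 2 ≤ 1) :
    (∀ κ' : ℤ_[2], (∃ m, κ' = 2 * m + 1) →
      ∀ n : ℕ, (lam - 1) / lam ^ n ≤ a ((2 : ℤ_[2]) ^ n * κ') ^ 2) ∧
    (∀ N : ℕ, ∀ x : ℤ_[2], ConsecBound ε N x → x ≠ 0 →
      (lam - 1) / lam ^ N ≤ a x ^ 2) := by
  have hlam0 : (0:ℝ) < lam := by linarith
  have part1 : ∀ κ' : ℤ_[2], (∃ m, κ' = 2 * m + 1) →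
      ∀ n : ℕ, (lam - 1) / lam ^ n ≤ a ((2 : ℤ_[2]) ^ n * κ') ^ 2 := by
    rintro κ' ⟨m, hm⟩ n
    induction n with
    | zero =>
      have hb := h1 m
      have hc := h3 (2 * m) ⟨m, rfl⟩
      simp only [pow_zero, one_mul, hm]
      linarith
    | succ n ih =>
      set y : ℤ_[2] := (2:ℤ_[2]) ^ n * κ' with hy
      have key := h2 (y - 1)
      have e1 : 2 * (y - 1) + 2 = (2:ℤ_[2]) ^ (n+1) * κ' := by rw [hy]; ring
      have e2 : (y - 1) + 1 = y := by ring
      rw [e1, e2] at key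
      have hb := h1 (y - 1)
      have hA1 : a (2 * (y - 1) + 1) ^ 2 ≤ lam := by nlinarith [sq_nonneg (a (2*(y-1)))]
      have hB0 : (0:ℝ) ≤ a ((2:ℤ_[2]) ^ (n+1) * κ') ^ 2 := sq_nonneg _
      have hlpow : (0:ℝ) < lam ^ n := pow_pos hlam0 n
      have hlb : a y ^ 2 ≤ lam * a ((2:ℤ_[2]) ^ (n+1) * κ') ^ 2 := by
        nlinarith [mul_nonneg (by linarith : (0:ℝ) ≤ lam - a (2*(y-1)+1)^2) hB0]
      rw [div_le_iff₀ (pow_pos hlam0 _)] at ih ⊢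
      rw [pow_succ lam n]
      nlinarith [mul_le_mul_of_nonneg_right hlb hlpow.le]
  refine ⟨part1, ?_⟩
  intro N x hcb hx
  -- x is not divisible by 2^(N+1)
  have hnd : ¬ ((2:ℤ_[2]) ^ (N+1) ∣ x) := by
    intro hdvd
    obtain ⟨hle, hsum⟩ := hdig x
    have hsummable : Summable (fun k : ℕ => (ε x k : ℤ_[2]) * 2 ^ k) := by
      apply Summable.of_norm_bounded (g := fun k : ℕ => (1/2 : ℝ) ^ k)
        (summable_geometric_of_lt_one (by norm_num) (by norm_num))
      intro k
      rw [norm_mul, norm_pow]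
      have h2n : ‖(2:ℤ_[2])‖ = 1/2 := by
        have := PadicInt.norm_p (p := 2); norm_num at this ⊢; exact this
      rw [h2n]
      have : ‖(ε x k : ℤ_[2])‖ ≤ 1 := PadicInt.norm_le_one _
      have hp : (0:ℝ) ≤ (1/2:ℝ)^k := by positivity
      nlinarith
    have hsummable2 : Summable (fun k : ℕ => (ε x (k + (N+1)) : ℤ_[2]) * 2 ^ k) := by
      apply Summable.of_norm_bounded (g := fun k : ℕ => (1/2 : ℝ) ^ k)
        (summable_geometric_of_lt_one (by norm_num) (by norm_num))
      intro k
      rw [norm_mul, norm_pow]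
      have h2n : ‖(2:ℤ_[2])‖ = 1/2 := by
        have := PadicInt.norm_p (p := 2); norm_num at this ⊢; exact this
      rw [h2n]
      have : ‖(ε x (k + (N+1)) : ℤ_[2])‖ ≤ 1 := PadicInt.norm_le_one _
      have hp : (0:ℝ) ≤ (1/2:ℝ)^k := by positivity
      nlinarith
    have hsplit := Summable.sum_add_tsum_nat_add (f := fun k : ℕ => (ε x k : ℤ_[2]) * 2 ^ k) (N+1) hsummable
    have htail : ∑' k : ℕ, (ε x (k + (N+1)) : ℤ_[2]) * 2 ^ (k + (N+1))
        = 2 ^ (N+1) * ∑' k : ℕ, (ε x (k + (N+1)) : ℤ_[2]) * 2 ^ k := by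
      rw [← hsummable2.tsum_mul_left]
      congr 1; funext k; ring
    -- x = S + 2^(N+1) * t
    have hxeq : x = (∑ k ∈ Finset.range (N+1), (ε x k : ℤ_[2]) * 2 ^ k)
        + 2 ^ (N+1) * ∑' k : ℕ, (ε x (k + (N+1)) : ℤ_[2]) * 2 ^ k := by
      rw [← htail, hsplit, ← hsum]
    have hSdvd : (2:ℤ_[2]) ^ (N+1) ∣ ∑ k ∈ Finset.range (N+1), (ε x k : ℤ_[2]) * 2 ^ k := by
      have : (∑ k ∈ Finset.range (N+1), (ε x k : ℤ_[2]) * 2 ^ k)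
          = x - 2 ^ (N+1) * ∑' k : ℕ, (ε x (k + (N+1)) : ℤ_[2]) * 2 ^ k := by
        linear_combination -hxeq
      rw [this]
      exact dvd_sub hdvd (Dvd.intro _ rfl)
    -- recast S as an integer
    set Sn : ℕ := ∑ k ∈ Finset.range (N+1), ε x k * 2 ^ k with hSn
    have hcast : (∑ k ∈ Finset.range (N+1), (ε x k : ℤ_[2]) * 2 ^ k) = ((Sn : ℤ) : ℤ_[2]) := by
      rw [hSn]; push_cast; ring
    rw [hcast] at hSdvd
    have h2dvd : ((2:ℤ) ^ (N+1)) ∣ (Sn : ℤ) := (PadicInt.pow_p_dvd_int_iff (N+1) (Sn:ℤ)).1 hSdvd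
    have hndvd : 2 ^ (N+1) ∣ Sn := by exact_mod_cast h2dvd
    have hSlt : Sn < 2 ^ (N+1) := by
      rw [hSn]
      have : ∀ M : ℕ, ∑ k ∈ Finset.range M, ε x k * 2 ^ k < 2 ^ M := by
        intro M
        induction M with
        | zero => simp
        | succ M ih =>
          rw [Finset.sum_range_succ, pow_succ]
          have := hle M
          nlinarith [Nat.one_le_two_pow (n := M)]
      exact this (N+1)
    have hS0 : Sn = 0 := Nat.eq_zero_of_dvd_of_lt hndvd hSlt
    have hz : ∀ k ≤ N, ε x k = 0 := by
      intro k hk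
      have h0 := Finset.sum_eq_zero_iff.mp (hSn.symm.trans hS0) k (Finset.mem_range.2 (by omega))
      have h2 : 0 < 2 ^ k := Nat.two_pow_pos k
      rcases Nat.mul_eq_zero.mp h0 with h | h
      · exact h
      · omega
    obtain ⟨i, hi, j, hj, hij⟩ := hcb 0
    simp only [Nat.zero_add] at hij
    exact hij ((hz i hi).trans (hz j hj).symm)
  -- decompose x = 2^v * u with u a unit
  have hspec := PadicInt.unitCoeff_spec hx
  set u : ℤ_[2] := (PadicInt.unitCoeff hx : ℤ_[2]) with hu
  set v : ℕ := x.valuation with hv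
  have hxdvd : (2:ℤ_[2]) ^ v ∣ x := ⟨u, by rw [hspec]; ring⟩
  have hvle : v ≤ N := by
    by_contra h
    push_neg at h
    exact hnd (dvd_trans (pow_dvd_pow 2 h) hxdvd)
  have hunotdvd : ¬ (2:ℤ_[2]) ∣ u := by
    intro hdv
    have h1 : ‖u‖ < 1 := (PadicInt.norm_lt_one_iff_dvd u).mpr (by exact_mod_cast hdv)
    rw [hu, PadicInt.norm_units] at h1
    norm_num at h1
  have happr := PadicInt.appr_spec 1 u
  rw [Ideal.mem_span_singleton] at happr
  have hlt := PadicInt.appr_lt u 1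
  have hodd : ∃ m : ℤ_[2], u = 2 * m + 1 := by
    have hcases : u.appr 1 = 0 ∨ u.appr 1 = 1 := by omega
    rcases hcases with h | h
    · exfalso
      rw [h] at happr
      simp only [Nat.cast_zero, sub_zero, pow_one] at happr
      exact hunotdvd happr
    · rw [h] at happr
      simp only [Nat.cast_one, pow_one] at happr
      obtain ⟨m, hm⟩ := happr
      exact ⟨m, by linear_combination hm⟩
  have hpart := part1 u hodd v
  have hxu : x = (2:ℤ_[2]) ^ v * u := by rw [hspec]; ring
  rw [← hxu] at hpart
  calc (lam - 1) / lam ^ N ≤ (lam - 1) / lam ^ v := by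
        have hpow : lam ^ v ≤ lam ^ N := pow_le_pow_right₀ (by linarith) hvle
        have hv0 : (0:ℝ) < lam ^ v := pow_pos hlam0 v
        exact div_le_div_of_nonneg_left (by linarith) hv0 hpow
    _ ≤ a x ^ 2 := hpart
end

section
/- Let λ > 2, T(x) = x² − λ, ξ = (1+√(1+4λ))/2. The function x ↦ w_x^0 = 1/(x+λ) is strictly decreasing on [-ξ,ξ], while for every k ≥ 1 the function x ↦ w_x^k = 2^{-k} ∑_{T^{∘k}(y)=x} 1/(y+λ) is nondecreasing on [-ξ,ξ]. -/
/-- Signed iterated preimage of `x` under `T(z) = z² - lam`: each Boolean chooses a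
branch `± √(· + lam)`, so that `T^[s.length] (pre lam s x) = x`. -/
noncomputable def pre (lam : ℝ) : List Bool → ℝ → ℝ
  | [], x => x
  | b :: t, x => (if b then 1 else -1) * Real.sqrt (pre lam t x + lam)

/-- Orbit of 0 under `z ↦ z² - lam`. -/
noncomputable def aseq (lam : ℝ) : ℕ → ℝ
  | 0 => 0
  | n + 1 => (aseq lam n) ^ 2 - lam

lemma aseq_one (lam : ℝ) : aseq lam 1 = -lam := by simp [aseq]

lemma pair_sum (lam A u : ℝ) (hu : 0 ≤ u + lam) (hne : u + lam < A ^ 2) :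
    (Real.sqrt (u + lam) - A)⁻¹ + (-Real.sqrt (u + lam) - A)⁻¹
      = 2 * A * (u - (A ^ 2 - lam))⁻¹ := by
  have hs2 : Real.sqrt (u + lam) ^ 2 = u + lam := Real.sq_sqrt hu
  set s := Real.sqrt (u + lam) with hs
  have h1 : s - A ≠ 0 := by
    intro h
    have hA : A = s := by linarith
    rw [hA] at hne; nlinarith [hs2]
  have h2 : -s - A ≠ 0 := by
    intro h
    have hA : A = -s := by linarith
    rw [hA] at hne; nlinarith [hs2]
  have h3 : u - (A ^ 2 - lam) ≠ 0 := fun h => by nlinarith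
  field_simp
  linear_combination 2 * A * hs2

lemma aseq_gt (lam xi : ℝ) (hlam : 2 < lam) (hx2 : xi ^ 2 = xi + lam)
    (hxpos : 0 < xi) (hxlam : xi < lam) :
    ∀ n : ℕ, xi < aseq lam (n + 2) := by
  intro n
  induction n with
  | zero =>
    have h2 : aseq lam 2 = lam ^ 2 - lam := by simp [aseq]
    rw [h2]; nlinarith
  | succ n ih =>
    have h3 : aseq lam (n + 1 + 2) = (aseq lam (n + 2)) ^ 2 - lam := rfl
    rw [h3]; nlinarith

lemma pre_mem (lam xi : ℝ) (hx2 : xi ^ 2 = xi + lam) (hxpos : 0 < xi) (hxlam : xi < lam) :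
    ∀ (l : List Bool) (x : ℝ), x ∈ Set.Icc (-xi) xi → pre lam l x ∈ Set.Icc (-xi) xi := by
  intro l
  induction l with
  | nil => intro x hx; exact hx
  | cons b t ih =>
    intro x hx
    obtain ⟨h1, h2⟩ := ih x hx
    have hle : Real.sqrt (pre lam t x + lam) ≤ xi := by
      calc Real.sqrt (pre lam t x + lam) ≤ Real.sqrt (xi ^ 2) :=
            Real.sqrt_le_sqrt (by nlinarith)
        _ = xi := Real.sqrt_sq hxpos.le
    have hge : 0 ≤ Real.sqrt (pre lam t x + lam) := Real.sqrt_nonneg _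
    show (if b then (1:ℝ) else -1) * Real.sqrt (pre lam t x + lam) ∈ Set.Icc (-xi) xi
    cases b <;> simp <;> constructor <;> linarith

lemma key (lam xi : ℝ) (hlam : 2 < lam) (hx2 : xi ^ 2 = xi + lam)
    (hxpos : 0 < xi) (hxlam : xi < lam) :
    ∀ (k m : ℕ) (x : ℝ), x ∈ Set.Icc (-xi) xi →
      ∑ s : Fin k → Bool, (pre lam (List.ofFn s) x - aseq lam (m + 1))⁻¹
        = (2 ^ k * ∏ j ∈ Finset.range k, aseq lam (m + 1 + j))
            * (x - aseq lam (m + k + 1))⁻¹ := by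
  have hA2 : ∀ m : ℕ, xi ^ 2 < (aseq lam (m + 1)) ^ 2 := by
    intro m
    match m with
    | 0 => rw [aseq_one]; nlinarith
    | Nat.succ m' =>
      have := aseq_gt lam xi hlam hx2 hxpos hxlam m'
      nlinarith
  intro k
  induction k with
  | zero =>
    intro m x hx
    simp [pre]
  | succ k ih =>
    intro m x hx
    have estep : ∀ f : (Fin (k + 1) → Bool) → ℝ,
        ∑ s : Fin (k + 1) → Bool, f s
          = ∑ p : Bool × (Fin k → Bool), f (Fin.cons p.1 p.2) := by
      intro f
      exact Fintype.sum_equiv (Fin.consEquiv (fun _ : Fin (k + 1) => Bool)).symm f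
        (fun p : Bool × (Fin k → Bool) => f (Fin.cons p.1 p.2))
        (fun s => (congrArg f (Fin.cons_self_tail s)).symm)
    rw [estep, Fintype.sum_prod_type, Fintype.sum_bool]
    have hofFn : ∀ (b : Bool) (t : Fin k → Bool),
        List.ofFn (Fin.cons b t) = b :: List.ofFn t := by
      intro b t; simp [List.ofFn_succ]
    simp only [hofFn]
    rw [← Finset.sum_add_distrib]
    have hterm : ∀ t : Fin k → Bool,
        (pre lam (true :: List.ofFn t) x - aseq lam (m + 1))⁻¹
          + (pre lam (false :: List.ofFn t) x - aseq lam (m + 1))⁻¹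
        = 2 * aseq lam (m + 1) * (pre lam (List.ofFn t) x - aseq lam (m + 1 + 1))⁻¹ := by
      intro t
      obtain ⟨hu1, hu2⟩ := pre_mem lam xi hx2 hxpos hxlam (List.ofFn t) x hx
      have h1 : pre lam (true :: List.ofFn t) x
          = Real.sqrt (pre lam (List.ofFn t) x + lam) := by simp [pre]
      have h2 : pre lam (false :: List.ofFn t) x
          = -Real.sqrt (pre lam (List.ofFn t) x + lam) := by simp [pre]
      rw [h1, h2]
      have hps := pair_sum lam (aseq lam (m + 1)) (pre lam (List.ofFn t) x)
        (by linarith) (by nlinarith [hA2 m])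
      rw [hps]
      have : aseq lam (m + 1 + 1) = (aseq lam (m + 1)) ^ 2 - lam := rfl
      rw [this]
    simp only [hterm]
    rw [← Finset.mul_sum, ih (m + 1) x hx]
    have ep : ∏ j ∈ Finset.range (k + 1), aseq lam (m + 1 + j)
        = aseq lam (m + 1) * ∏ j ∈ Finset.range k, aseq lam (m + 1 + 1 + j) := by
      rw [Finset.prod_range_succ', mul_comm]
      congr 1
      apply Finset.prod_congr rfl
      intro j _
      congr 1
      omega
    have e1 : m + 1 + k + 1 = m + (k + 1) + 1 := by omega
    rw [ep, e1]
    ring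

theorem stmt19 (lam : ℝ) (hlam : 2 < lam)
    (xi : ℝ) (hxi : xi = (1 + Real.sqrt (1 + 4 * lam)) / 2) :
    StrictAntiOn (fun x : ℝ => (x + lam)⁻¹) (Set.Icc (-xi) xi) ∧
    ∀ k : ℕ, 1 ≤ k → MonotoneOn
      (fun x : ℝ => ((2 : ℝ) ^ k)⁻¹ * ∑ s : Fin k → Bool, (pre lam (List.ofFn s) x + lam)⁻¹)
      (Set.Icc (-xi) xi) := by
  have hr2 : Real.sqrt (1 + 4 * lam) ^ 2 = 1 + 4 * lam := Real.sq_sqrt (by linarith)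
  have hr0 : 0 ≤ Real.sqrt (1 + 4 * lam) := Real.sqrt_nonneg _
  have hx2 : xi ^ 2 = xi + lam := by rw [hxi]; nlinarith
  have hxpos : 0 < xi := by rw [hxi]; linarith
  have hxlam : xi < lam := by rw [hxi]; nlinarith [hr2, hr0]
  constructor
  · intro x hx y hy hxy
    have h1 : 0 < x + lam := by have := hx.1; linarith
    simp only
    rw [inv_lt_inv₀ (by linarith) h1]
    linarith
  · rintro k hk
    obtain ⟨k', rfl⟩ : ∃ k', k = k' + 1 := ⟨k - 1, by omega⟩
    intro x hx y hy hxy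
    have hone : aseq lam (0 + 1) = -lam := by rw [Nat.zero_add, aseq_one]
    have hiKx := key lam xi hlam hx2 hxpos hxlam (k' + 1) 0 x hx
    have hiKy := key lam xi hlam hx2 hxpos hxlam (k' + 1) 0 y hy
    rw [hone] at hiKx hiKy
    simp only [sub_neg_eq_add] at hiKx hiKy
    simp only
    rw [hiKx, hiKy]
    set A := aseq lam (0 + (k' + 1) + 1) with hAdef
    set P := ∏ j ∈ Finset.range (k' + 1), aseq lam (0 + 1 + j) with hPdef
    have hA : xi < A := by
      have := aseq_gt lam xi hlam hx2 hxpos hxlam k'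
      have e : 0 + (k' + 1) + 1 = k' + 2 := by omega
      rw [hAdef, e]; exact this
    have hP : P < 0 := by
      have hPpos : 0 < ∏ j ∈ Finset.range k', aseq lam (0 + 1 + (j + 1)) :=
        Finset.prod_pos (fun j _ => by
          have := aseq_gt lam xi hlam hx2 hxpos hxlam j
          have e : 0 + 1 + (j + 1) = j + 2 := by omega
          rw [e]; linarith)
      rw [hPdef, Finset.prod_range_succ']
      have e0 : aseq lam (0 + 1 + 0) = -lam := by norm_num [aseq_one]
      rw [e0]
      nlinarith
    have hxA : x - A < 0 := by have := hx.2; linarith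
    have hyA : y - A < 0 := by have := hy.2; linarith
    have hinv : (y - A)⁻¹ ≤ (x - A)⁻¹ := by
      have hpos : 0 < A - y := by linarith
      have hle : A - y ≤ A - x := by linarith
      have h := one_div_le_one_div_of_le hpos hle
      rw [show x - A = -(A - x) by ring, show y - A = -(A - y) by ring, inv_neg, inv_neg]
      simp only [one_div] at h
      linarith
    have h2k : (0 : ℝ) < 2 ^ (k' + 1) := by positivity
    have hmain : P * (x - A)⁻¹ ≤ P * (y - A)⁻¹ :=
      mul_le_mul_of_nonpos_left hinv hP.le
    calc ((2:ℝ) ^ (k' + 1))⁻¹ * (2 ^ (k' + 1) * P * (x - A)⁻¹)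
        = P * (x - A)⁻¹ := by field_simp
      _ ≤ P * (y - A)⁻¹ := hmain
      _ = ((2:ℝ) ^ (k' + 1))⁻¹ * (2 ^ (k' + 1) * P * (y - A)⁻¹) := by field_simp
end
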